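/- Assume the global d-set condition, let 0 < α < d, let p > d/α, and let f ∈ L^p(E; m). Then lim_{r→0} sup_{x ∈ E} ∫_{B(x,r)} |x − y|^{α−d} |f(y)| m(dy) = 0; that is, for every ε > 0 there is r₀ > 0 such that for all r ∈ (0, r₀) and all x ∈ E, ∫_{B(x,r)} |x − y|^{α−d} |f(y)| m(dy) < ε. -/

import Mathlib

open MeasureTheory Set
open scoped ENNReal NNReal

/-- On a global `d`-set `E ⊆ ℝⁿ`, for `0 < α < d`, `p > d/α` and `f ∈ L^p(E;m)`:
`lim_{r→0} sup_{x ∈ E} ∫_{B(x,r)} |x-y|^{α-d} |f(y)| m(dy) = 0`. -/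
theorem stmt_11 (n : ℕ) (hn : 1 ≤ n) (d : ℝ) (hd0 : 0 < d) (hdn : d ≤ n)
    (E : Set (EuclideanSpace ℝ (Fin n))) (hE : MeasurableSet E) (hEne : E.Nonempty)
    (m : Measure (EuclideanSpace ℝ (Fin n))) (hmE : m Eᶜ = 0)
    (C₁ C₂ : ℝ) (hC₁ : 0 < C₁) (hC₁₂ : C₁ ≤ C₂)
    (hlow : ∀ x ∈ E, ∀ r : ℝ, 0 < r → ENNReal.ofReal (C₁ * r ^ d) ≤ m (Metric.ball x r))
    (hup : ∀ x ∈ E, ∀ r : ℝ, 0 < r → m (Metric.ball x r) ≤ ENNReal.ofReal (C₂ * r ^ d))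
    (α p : ℝ) (hα0 : 0 < α) (hαd : α < d) (hp : d / α < p)
    (f : EuclideanSpace ℝ (Fin n) → ℝ)
    (hf : MemLp f (ENNReal.ofReal p) (m.restrict E)) :
    ∀ ε : ℝ, 0 < ε → ∃ r₀ : ℝ, 0 < r₀ ∧ ∀ r : ℝ, 0 < r → r < r₀ → ∀ x ∈ E,
      (∫⁻ y in Metric.ball x r, ENNReal.ofReal (dist x y ^ (α - d) * |f y|) ∂m)
        < ENNReal.ofReal ε := by
  intro ε hε
  have hC₂ : 0 < C₂ := hC₁.trans_le hC₁₂
  -- basic exponent facts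
  have hp1 : 1 < p := lt_trans ((one_lt_div hα0).2 hαd) hp
  have hp0 : 0 < p := lt_trans one_pos hp1
  set q : ℝ := p.conjExponent with hqdef
  have hpq : p.HolderConjugate q := Real.HolderConjugate.conjExponent hp1
  have hqp : q.HolderConjugate p := hpq.symm
  have hq0 : 0 < q := hqp.pos
  set β : ℝ := (d - α) * q with hβdef
  have hβ0 : 0 < β := mul_pos (by linarith) hq0
  have hβd : β < d := by
    have hq : q = p / (p - 1) := rfl
    have hdp : d < α * p := by
      have := (div_lt_iff₀ hα0).mp hp
      linarith [this]
    rw [hβdef, hq, mul_div_assoc', div_lt_iff₀ (by linarith : (0:ℝ) < p - 1)]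
    nlinarith
  set γ : ℝ := (d - β) / q with hγdef
  have hγ0 : 0 < γ := div_pos (by linarith) hq0
  -- the measure is concentrated on E
  have hm : m.restrict E = m := by
    refine Measure.restrict_eq_self_of_ae_mem ?_
    rw [MeasureTheory.ae_iff]
    simpa [Set.compl_def] using hmE
  have hfm : AEMeasurable f m := by
    have := hf.1.aemeasurable
    rwa [hm] at this
  -- the Lᵖ norm
  set N : ℝ≥0∞ := (∫⁻ y, (‖f y‖₊ : ℝ≥0∞) ^ p ∂m) ^ (1 / p) with hNdef
  have hN : N ≠ ⊤ := by
    have h2 := hf.2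
    rw [hm, eLpNorm_eq_lintegral_rpow_enorm_toReal (by simpa [ENNReal.ofReal_eq_zero] using hp0)
      ENNReal.ofReal_ne_top, ENNReal.toReal_ofReal hp0.le] at h2
    exact h2.ne
  -- geometric ratio
  set t : ℝ := (2:ℝ) ^ (-(d - β)) with htdef
  have ht0 : 0 < t := Real.rpow_pos_of_pos two_pos _
  have ht1 : t < 1 := Real.rpow_lt_one_of_one_lt_of_neg one_lt_two (by linarith)
  have hsub : (1 : ℝ≥0∞) - ENNReal.ofReal t ≠ 0 := by
    have : ENNReal.ofReal t < 1 := ENNReal.ofReal_lt_one.mpr ht1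
    exact (tsub_pos_iff_lt.mpr this).ne'
  set M₀ : ℝ≥0∞ := ENNReal.ofReal (C₂ * (2:ℝ) ^ β) * (1 - ENNReal.ofReal t)⁻¹ with hM₀def
  have hM₀ : M₀ ≠ ⊤ :=
    ENNReal.mul_ne_top ENNReal.ofReal_ne_top (ENNReal.inv_ne_top.mpr hsub)
  -- key kernel estimate
  have key : ∀ x ∈ E, ∀ r : ℝ, 0 < r →
      (∫⁻ y in Metric.ball x r, ENNReal.ofReal (dist x y ^ (-β)) ∂m)
        ≤ M₀ * ENNReal.ofReal (r ^ (d - β)) := by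
    intro x hx r hr
    set F : ℕ → EuclideanSpace ℝ (Fin n) → ℝ≥0∞ := fun j =>
      (Metric.ball x (r * (2:ℝ) ^ (-(j:ℝ)))).indicator
        (fun _ => ENNReal.ofReal ((r * (2:ℝ) ^ (-(j:ℝ) - 1)) ^ (-β))) with hFdef
    have hFmeas : ∀ j, Measurable (F j) := fun j =>
      measurable_const.indicator measurableSet_ball
    have hpt : ∀ y, (Metric.ball x r).indicator
        (fun y => ENNReal.ofReal (dist x y ^ (-β))) y ≤ ∑' j, F j y := by
      intro y
      by_cases hy : y ∈ Metric.ball x r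
      · rw [Set.indicator_of_mem hy]
        have hs0 : 0 ≤ dist x y := dist_nonneg
        have hsr : dist x y < r := by rw [dist_comm]; exact Metric.mem_ball.mp hy
        rcases eq_or_lt_of_le hs0 with h0 | hs
        · rw [← h0, Real.zero_rpow (by linarith : -β ≠ 0)]
          simp
        · set s : ℝ := dist x y with hsdef
          have hrs1 : 1 < r / s := (one_lt_div hs).2 hsr
          set L : ℝ := Real.logb 2 (r / s) with hLdef
          have hL0 : 0 < L := Real.logb_pos one_lt_two hrs1
          set j : ℕ := ⌈L⌉₊ - 1 with hjdef
          have hceil : 1 ≤ ⌈L⌉₊ := Nat.ceil_pos.mpr hL0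
          have hjcast : (j : ℝ) = (⌈L⌉₊ : ℝ) - 1 := by
            rw [hjdef, Nat.cast_sub hceil, Nat.cast_one]
          have hj1 : (j : ℝ) < L := by
            have := Nat.ceil_lt_add_one hL0.le
            rw [hjcast]; linarith
          have hj2 : L ≤ (j : ℝ) + 1 := by
            have := Nat.le_ceil L
            rw [hjcast]; linarith
          have hrs0 : 0 < r / s := lt_trans one_pos hrs1
          have h2L : (2:ℝ) ^ L = r / s := Real.rpow_logb two_pos (by norm_num) hrs0
          have h2j : (2:ℝ) ^ (j:ℝ) < r / s := by
            rw [← h2L]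
            exact (Real.rpow_lt_rpow_left_iff one_lt_two).mpr hj1
          have h2j' : r / s ≤ (2:ℝ) ^ ((j:ℝ) + 1) := by
            rw [← h2L]
            exact (Real.rpow_le_rpow_left_iff one_lt_two).mpr hj2
          have h2jpos : (0:ℝ) < (2:ℝ) ^ (j:ℝ) := Real.rpow_pos_of_pos two_pos _
          have h2jpos' : (0:ℝ) < (2:ℝ) ^ ((j:ℝ) + 1) := Real.rpow_pos_of_pos two_pos _
          have hmem : y ∈ Metric.ball x (r * (2:ℝ) ^ (-(j:ℝ))) := by
            rw [Metric.mem_ball, dist_comm, ← hsdef,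
              Real.rpow_neg two_pos.le, mul_comm r, ← div_eq_inv_mul, lt_div_iff₀ h2jpos]
            calc s * (2:ℝ) ^ (j:ℝ) < s * (r / s) := by
                  exact mul_lt_mul_of_pos_left h2j hs
              _ = r := by field_simp
          have hlb : r * (2:ℝ) ^ (-(j:ℝ) - 1) ≤ s := by
            have hstep : r ≤ s * (2:ℝ) ^ ((j:ℝ) + 1) := by
              have := (div_le_iff₀ hs).mp h2j'
              linarith [this]
            have h1 : r * (2:ℝ) ^ (-(j:ℝ) - 1) = r / (2:ℝ) ^ ((j:ℝ) + 1) := by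
              rw [show -(j:ℝ) - 1 = -((j:ℝ) + 1) by ring, Real.rpow_neg two_pos.le,
                div_eq_mul_inv]
            rw [h1, div_le_iff₀ h2jpos']
            linarith
          have hlbpos : 0 < r * (2:ℝ) ^ (-(j:ℝ) - 1) :=
            mul_pos hr (Real.rpow_pos_of_pos two_pos _)
          calc ENNReal.ofReal (s ^ (-β))
              ≤ ENNReal.ofReal ((r * (2:ℝ) ^ (-(j:ℝ) - 1)) ^ (-β)) := by
                exact ENNReal.ofReal_le_ofReal
                  (Real.rpow_le_rpow_of_nonpos hlbpos hlb (by linarith))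
            _ = F j y := by rw [hFdef]; simp only [Set.indicator_of_mem hmem]
            _ ≤ ∑' j, F j y := ENNReal.le_tsum j
      · rw [Set.indicator_of_notMem hy]
        exact zero_le
    calc (∫⁻ y in Metric.ball x r, ENNReal.ofReal (dist x y ^ (-β)) ∂m)
        = ∫⁻ y, (Metric.ball x r).indicator
            (fun y => ENNReal.ofReal (dist x y ^ (-β))) y ∂m :=
          (lintegral_indicator measurableSet_ball _).symm
      _ ≤ ∫⁻ y, ∑' j, F j y ∂m := lintegral_mono hpt
      _ = ∑' j, ∫⁻ y, F j y ∂m :=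
          lintegral_tsum fun j => (hFmeas j).aemeasurable
      _ ≤ ∑' (j : ℕ), ENNReal.ofReal (C₂ * (2:ℝ) ^ β * r ^ (d - β)) * ENNReal.ofReal t ^ j := by
          refine ENNReal.tsum_le_tsum fun j => ?_
          rw [hFdef]
          rw [lintegral_indicator_const measurableSet_ball]
          have hrj : (0:ℝ) < r * (2:ℝ) ^ (-(j:ℝ)) :=
            mul_pos hr (Real.rpow_pos_of_pos two_pos _)
          calc ENNReal.ofReal ((r * (2:ℝ) ^ (-(j:ℝ) - 1)) ^ (-β)) * m (Metric.ball x (r * (2:ℝ) ^ (-(j:ℝ))))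
              ≤ ENNReal.ofReal ((r * (2:ℝ) ^ (-(j:ℝ) - 1)) ^ (-β)) *
                  ENNReal.ofReal (C₂ * (r * (2:ℝ) ^ (-(j:ℝ))) ^ d) :=
                mul_le_mul_right (hup x hx _ hrj) _
            _ = ENNReal.ofReal ((r * (2:ℝ) ^ (-(j:ℝ) - 1)) ^ (-β) *
                  (C₂ * (r * (2:ℝ) ^ (-(j:ℝ))) ^ d)) :=
                (ENNReal.ofReal_mul (Real.rpow_nonneg (by positivity) _)).symm
            _ = ENNReal.ofReal (C₂ * (2:ℝ) ^ β * r ^ (d - β)) * ENNReal.ofReal t ^ j := by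
                have e1 : (r * (2:ℝ) ^ (-(j:ℝ) - 1)) ^ (-β) *
                    (C₂ * (r * (2:ℝ) ^ (-(j:ℝ))) ^ d)
                    = C₂ * (2:ℝ) ^ β * r ^ (d - β) * t ^ j := by
                  rw [Real.mul_rpow hr.le (Real.rpow_nonneg two_pos.le _),
                      Real.mul_rpow hr.le (Real.rpow_nonneg two_pos.le _),
                      ← Real.rpow_mul two_pos.le, ← Real.rpow_mul two_pos.le,
                      ← Real.rpow_natCast t j, htdef, ← Real.rpow_mul two_pos.le]
                  have er : r ^ (d - β) = r ^ (-β) * r ^ d := by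
                    rw [← Real.rpow_add hr]; congr 1; ring
                  have e2 : (2:ℝ) ^ ((-(j:ℝ) - 1) * (-β)) * (2:ℝ) ^ (-(j:ℝ) * d) =
                      (2:ℝ) ^ β * (2:ℝ) ^ (-(d - β) * (j:ℝ)) := by
                    rw [← Real.rpow_add two_pos, ← Real.rpow_add two_pos]; congr 1; ring
                  rw [er]
                  linear_combination (r ^ (-β) * r ^ d * C₂) * e2
                rw [e1, ENNReal.ofReal_mul (by positivity),
                  ENNReal.ofReal_pow ht0.le]
      _ = ENNReal.ofReal (C₂ * (2:ℝ) ^ β * r ^ (d - β)) * (1 - ENNReal.ofReal t)⁻¹ := by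
          rw [ENNReal.tsum_mul_left, ENNReal.tsum_geometric]
      _ = M₀ * ENNReal.ofReal (r ^ (d - β)) := by
          rw [hM₀def, ENNReal.ofReal_mul (by positivity)]
          ring
  -- the full constant
  set M : ℝ≥0∞ := M₀ ^ (1 / q) * N with hMdef
  have hM : M ≠ ⊤ :=
    ENNReal.mul_ne_top (ENNReal.rpow_ne_top_of_nonneg (by positivity) hM₀) hN
  -- main Hölder bound
  have main : ∀ x ∈ E, ∀ r : ℝ, 0 < r →
      (∫⁻ y in Metric.ball x r, ENNReal.ofReal (dist x y ^ (α - d) * |f y|) ∂m)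
        ≤ M * ENNReal.ofReal (r ^ γ) := by
    intro x hx r hr
    set μ : Measure (EuclideanSpace ℝ (Fin n)) := m.restrict (Metric.ball x r) with hμdef
    set g1 : EuclideanSpace ℝ (Fin n) → ℝ≥0∞ :=
      fun y => ENNReal.ofReal (dist x y ^ (α - d)) with hg1def
    set g2 : EuclideanSpace ℝ (Fin n) → ℝ≥0∞ := fun y => ENNReal.ofReal |f y| with hg2def
    have hg1m : AEMeasurable g1 μ :=
      (((continuous_const.dist continuous_id).measurable.pow measurable_const).ennreal_ofReal).aemeasurable
    have hg2m : AEMeasurable g2 μ :=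
      (ENNReal.measurable_ofReal.comp_aemeasurable (hfm.norm.restrict)).congr
        (Filter.Eventually.of_forall fun y => by simp [Real.norm_eq_abs, hg2def])
    have holder := ENNReal.lintegral_mul_le_Lp_mul_Lq μ hqp hg1m hg2m
    have hintegrand : (∫⁻ y in Metric.ball x r,
        ENNReal.ofReal (dist x y ^ (α - d) * |f y|) ∂m) = ∫⁻ y, (g1 * g2) y ∂μ := by
      refine lintegral_congr fun y => ?_
      simp only [Pi.mul_apply, hg1def, hg2def]
      rw [ENNReal.ofReal_mul (Real.rpow_nonneg dist_nonneg _)]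
    -- first factor
    have hfact1 : (∫⁻ y, g1 y ^ q ∂μ) ^ (1 / q) ≤ M₀ ^ (1 / q) * ENNReal.ofReal (r ^ γ) := by
      have heq : ∀ y, g1 y ^ q = ENNReal.ofReal (dist x y ^ (-β)) := by
        intro y
        rw [hg1def, ENNReal.ofReal_rpow_of_nonneg (Real.rpow_nonneg dist_nonneg _) hq0.le,
          ← Real.rpow_mul dist_nonneg]
        congr 2
        rw [hβdef]; ring
      calc (∫⁻ y, g1 y ^ q ∂μ) ^ (1 / q)
          = (∫⁻ y in Metric.ball x r, ENNReal.ofReal (dist x y ^ (-β)) ∂m) ^ (1 / q) := by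
            rw [hμdef]; congr 1; exact lintegral_congr heq
        _ ≤ (M₀ * ENNReal.ofReal (r ^ (d - β))) ^ (1 / q) :=
            ENNReal.rpow_le_rpow (key x hx r hr) (by positivity)
        _ = M₀ ^ (1 / q) * ENNReal.ofReal (r ^ γ) := by
            rw [ENNReal.mul_rpow_of_nonneg _ _ (by positivity),
              ENNReal.ofReal_rpow_of_pos (Real.rpow_pos_of_pos hr _),
              ← Real.rpow_mul hr.le]
            congr 3
            rw [hγdef]; ring
    -- second factor
    have hfact2 : (∫⁻ y, g2 y ^ p ∂μ) ^ (1 / p) ≤ N := by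
      have heq : ∀ y, g2 y ^ p = (‖f y‖₊ : ℝ≥0∞) ^ p := by
        intro y
        rw [hg2def, ← enorm_eq_nnnorm, Real.enorm_eq_ofReal_abs]
      calc (∫⁻ y, g2 y ^ p ∂μ) ^ (1 / p)
          = (∫⁻ y, (‖f y‖₊ : ℝ≥0∞) ^ p ∂μ) ^ (1 / p) := by
            congr 1; exact lintegral_congr heq
        _ ≤ (∫⁻ y, (‖f y‖₊ : ℝ≥0∞) ^ p ∂m) ^ (1 / p) :=
            ENNReal.rpow_le_rpow (lintegral_mono' Measure.restrict_le_self le_rfl)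
              (by positivity)
        _ = N := rfl
    calc (∫⁻ y in Metric.ball x r, ENNReal.ofReal (dist x y ^ (α - d) * |f y|) ∂m)
        ≤ (∫⁻ y, g1 y ^ q ∂μ) ^ (1 / q) * (∫⁻ y, g2 y ^ p ∂μ) ^ (1 / p) := by
          rw [hintegrand]; exact holder
      _ ≤ (M₀ ^ (1 / q) * ENNReal.ofReal (r ^ γ)) * N := mul_le_mul' hfact1 hfact2
      _ = M * ENNReal.ofReal (r ^ γ) := by rw [hMdef]; ring
  -- choose r₀
  set δ : ℝ := min 1 (ε / (2 * (M.toReal + 1))) with hδdef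
  have hMt : 0 ≤ M.toReal := ENNReal.toReal_nonneg
  have hδ0 : 0 < δ := lt_min one_pos (by positivity)
  refine ⟨δ ^ (1 / γ), Real.rpow_pos_of_pos hδ0 _, ?_⟩
  intro r hr hrr₀ x hx
  have hrγ : r ^ γ ≤ δ := by
    have h1 : r ^ γ < (δ ^ (1 / γ)) ^ γ := Real.rpow_lt_rpow hr.le hrr₀ hγ0
    rw [← Real.rpow_mul hδ0.le, one_div, inv_mul_cancel₀ hγ0.ne', Real.rpow_one] at h1
    exact h1.le
  calc (∫⁻ y in Metric.ball x r, ENNReal.ofReal (dist x y ^ (α - d) * |f y|) ∂m)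
      ≤ M * ENNReal.ofReal (r ^ γ) := main x hx r hr
    _ ≤ M * ENNReal.ofReal δ := mul_le_mul_right (ENNReal.ofReal_le_ofReal hrγ) _
    _ < ENNReal.ofReal ε := by
        rw [ENNReal.lt_ofReal_iff_toReal_lt (ENNReal.mul_ne_top hM ENNReal.ofReal_ne_top)]
        rw [ENNReal.toReal_mul, ENNReal.toReal_ofReal hδ0.le]
        have hδε : δ ≤ ε / (2 * (M.toReal + 1)) := min_le_right _ _
        have : M.toReal * δ ≤ M.toReal * (ε / (2 * (M.toReal + 1))) :=
          mul_le_mul_of_nonneg_left hδε hMt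
        have h2 : M.toReal * (ε / (2 * (M.toReal + 1))) < ε := by
          have hfrac : M.toReal / (2 * (M.toReal + 1)) < 1 := by
            rw [div_lt_one (by positivity)]; linarith
          calc M.toReal * (ε / (2 * (M.toReal + 1)))
              = ε * (M.toReal / (2 * (M.toReal + 1))) := by ring
            _ < ε * 1 := mul_lt_mul_of_pos_left hfrac hε
            _ = ε := mul_one ε
        linarith
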